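/- Let k ≥ 2 be a fixed integer. There is a constant C depending only on k such that for all x ≥ 2, the sum of D_{k-1}(n) over 2-full integers n ≤ x is at most C·x^{1/2}·(log x)^{k-2}. -/

import Mathlib

open Finset ArithmeticFunction Filter Asymptotics

/-- The Piltz divisor function `d_k(n)`: the number of ways of writing `n`
as an ordered product of `k` positive integers (the `k`-fold Dirichlet
convolution of the constant-one function). -/
noncomputable def piltz (k n : ℕ) : ℕ := (ArithmeticFunction.zeta ^ k : ArithmeticFunction ℕ) n

/-- `D_k(n) = d_k(n) / k^{ω(n)}`. -/
noncomputable def Dk (k n : ℕ) : ℝ := (piltz k n : ℝ) / (k : ℝ) ^ n.primeFactors.card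

/-- `n` is 2-full: every prime dividing `n` divides it at least twice. -/
def TwoFull (n : ℕ) : Prop := ∀ p ∈ n.primeFactors, p ^ 2 ∣ n

instance : DecidablePred TwoFull := fun n =>
  inferInstanceAs (Decidable (∀ p ∈ n.primeFactors, p ^ 2 ∣ n))

/-- The characteristic function of 2-full integers. -/
noncomputable def s2 (n : ℕ) : ℝ := if TwoFull n then 1 else 0

/-- `g_k(n) = ((k-1)/k) · s₂(n) · D_{k-1}(n)`. -/
noncomputable def gk (k n : ℕ) : ℝ := ((k : ℝ) - 1) / k * s2 n * Dk (k - 1) n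

/-- The Euler product constant `A_k`. -/
noncomputable def Ak (k : ℕ) : ℝ :=
  ∏' p : Nat.Primes,
    (1 - 1 / ((p : ℕ) : ℝ)) * (1 - 1 / k + (1 / k : ℝ) * ((1 - 1 / ((p : ℕ) : ℝ)) ^ k)⁻¹)

/-- `G_k(q) = A_k · ∏_{p ∣ q} k / (k - 1 + (1 - 1/p)^{-k})`. -/
noncomputable def Gk (k q : ℕ) : ℝ :=
  Ak k * ∏ p ∈ q.primeFactors, (k : ℝ) / ((k : ℝ) - 1 + ((1 - 1 / (p : ℝ)) ^ k)⁻¹)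


section Aux

lemma piltz_mult (j : ℕ) : IsMultiplicative (ArithmeticFunction.zeta ^ j : ArithmeticFunction ℕ) := by
  induction j with
  | zero => simpa using isMultiplicative_one
  | succ j ih => rw [pow_succ]; exact ih.mul isMultiplicative_zeta

lemma piltz_one (j : ℕ) : piltz j 1 = 1 := (piltz_mult j).1

lemma piltz_succ_apply (j n : ℕ) (hn : n ≠ 0) :
    piltz (j+1) n = ∑ d ∈ n.divisors, piltz j d := by
  unfold piltz
  rw [pow_succ, mul_apply,
    Nat.sum_divisorsAntidiagonal (fun a b => (ArithmeticFunction.zeta^j : ArithmeticFunction ℕ) a * ArithmeticFunction.zeta b)]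
  apply Finset.sum_congr rfl
  intro d hd
  rw [Nat.mem_divisors] at hd
  have hd0 : 0 < d := Nat.pos_of_dvd_of_pos hd.1 (Nat.pos_of_ne_zero hn)
  have h2 : n / d ≠ 0 := Nat.ne_of_gt (Nat.div_pos (Nat.le_of_dvd (Nat.pos_of_ne_zero hn) hd.1) hd0)
  rw [zeta_apply, if_neg h2, mul_one]

lemma piltz_prime_pow (j e p : ℕ) (hp : p.Prime) :
    piltz (j+1) (p^e) = (e + j).choose j := by
  induction j generalizing e with
  | zero => simp [piltz, zeta_apply, pow_ne_zero e hp.ne_zero, hp.ne_zero]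
  | succ j ih =>
    rw [piltz_succ_apply _ _ (pow_ne_zero e hp.ne_zero),
      Nat.sum_divisors_prime_pow hp]
    have : ∀ i ∈ range (e+1), piltz (j+1) (p^i) = (i+j).choose j := fun i _ => ih i
    rw [Finset.sum_congr rfl this]
    have h2 : ∑ i ∈ range (e+1), (i+j).choose j = ∑ m ∈ Icc j (e+j), m.choose j := by
      rw [← Finset.Ico_add_one_right_eq_Icc]
      rw [Finset.sum_Ico_eq_sum_range]
      apply Finset.sum_congr
      · congr 1; omega
      · intro i _; congr 1; omega
    rw [h2, Nat.sum_Icc_choose, Nat.add_assoc]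

/-- exponent placed on the squarefree "cube part" (3) / "fourth-power part" (4). -/
def gam (e : ℕ) : ℕ := if e % 2 = 1 then 3 else if 4 ≤ e then 4 else 0

def alp (e : ℕ) : ℕ := (e - gam e) / 2

lemma gam_alp (e : ℕ) (he : 2 ≤ e) : 2 * alp e + gam e = e := by
  unfold alp gam; rcases Nat.even_or_odd e with h | h
  · rw [Nat.even_iff] at h; split_ifs <;> omega
  · rw [Nat.odd_iff] at h; split_ifs <;> omega

lemma gam_le (e : ℕ) : gam e ≤ 4 := by unfold gam; split_ifs <;> omega

lemma descFact_master (a m : ℕ) :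
    (2*a+4+m).descFactorial m ≤ 5^m * (a+m).descFactorial m := by
  rw [Nat.descFactorial_eq_prod_range, Nat.descFactorial_eq_prod_range,
    show (5:ℕ)^m = ∏ _i ∈ range m, 5 by simp, ← Finset.prod_mul_distrib]
  apply Finset.prod_le_prod'
  intro i hi
  rw [Finset.mem_range] at hi
  omega

lemma choose_master (a m : ℕ) :
    (2*a+4+m).choose m ≤ 5^m * (a+m).choose m := by
  have h := descFact_master a m
  rw [Nat.descFactorial_eq_factorial_mul_choose, Nat.descFactorial_eq_factorial_mul_choose] at h
  rw [mul_left_comm] at h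
  exact Nat.le_of_mul_le_mul_left h (Nat.factorial_pos m)

lemma perprime (m e p : ℕ) (hp : p.Prime) (he : 2 ≤ e) :
    piltz (m+1) (p^e) ≤ (m+1) * (if gam e = 0 then 1 else 5^m) * piltz (m+1) (p^(alp e)) := by
  rw [piltz_prime_pow _ _ _ hp, piltz_prime_pow _ _ _ hp]
  rcases eq_or_lt_of_le he with h2 | h3
  · -- e = 2
    subst h2
    have hg : gam 2 = 0 := by decide
    have ha : alp 2 = 1 := by decide
    rw [hg, ha, if_pos rfl, mul_one]
    have h1 : (2+m).choose m = (m+2).choose 2 := by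
      rw [show m+2 = 2+m by omega, ← Nat.choose_symm (by omega)]
      congr 1; omega
    have h2' : (1+m).choose m = m+1 := by
      rw [show 1+m = m+1 by omega]; exact Nat.choose_succ_self_right m
    rw [h1, h2', Nat.choose_two_right]
    apply Nat.div_le_of_le_mul
    rw [show m+2-1 = m+1 from rfl]
    nlinarith
  · -- e ≥ 3
    have hg : gam e ≠ 0 := by
      unfold gam; rcases Nat.even_or_odd e with h | h
      · rw [Nat.even_iff] at h; split_ifs <;> omega
      · rw [Nat.odd_iff] at h; split_ifs <;> omega
    rw [if_neg hg]
    have hle : e ≤ 2 * alp e + 4 := by have := gam_alp e he; have := gam_le e; omega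
    calc (e+m).choose m ≤ (2*alp e+4+m).choose m := Nat.choose_le_choose m (by omega)
      _ ≤ 5^m * (alp e + m).choose m := choose_master _ m
      _ ≤ (m+1) * (5^m * (alp e + m).choose m) := Nat.le_mul_of_pos_left _ (by omega)
      _ = (m+1) * 5^m * (alp e+m).choose m := by ring

def cpart (n : ℕ) : ℕ := ∏ p ∈ n.primeFactors.filter (fun p => gam (n.factorization p) = 3), p
def dpart (n : ℕ) : ℕ := ∏ p ∈ n.primeFactors.filter (fun p => gam (n.factorization p) = 4), p
def apart (n : ℕ) : ℕ := ∏ p ∈ n.primeFactors, p ^ alp (n.factorization p)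

lemma gam_cases (e : ℕ) : gam e = 0 ∨ gam e = 3 ∨ gam e = 4 := by
  unfold gam; split_ifs <;> omega

lemma twofull_exp {n p : ℕ} (hn : n ≠ 0) (h2 : TwoFull n) (hp : p ∈ n.primeFactors) :
    2 ≤ n.factorization p := by
  have pp := Nat.prime_of_mem_primeFactors hp
  exact (Nat.Prime.pow_dvd_iff_le_factorization pp hn).mp (h2 p hp)

lemma parts_mul {n : ℕ} (hn : n ≠ 0) (h2 : TwoFull n) :
    apart n ^ 2 * (cpart n ^ 3 * dpart n ^ 4) = n := by
  conv_rhs => rw [← Nat.factorization_prod_pow_eq_self hn]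
  rw [Finsupp.prod, Nat.support_factorization]
  unfold apart cpart dpart
  rw [← Finset.prod_pow, ← Finset.prod_pow, ← Finset.prod_pow,
    Finset.prod_filter, Finset.prod_filter, ← Finset.prod_mul_distrib,
    ← Finset.prod_mul_distrib]
  apply Finset.prod_congr rfl
  intro p hp
  have he := twofull_exp hn h2 hp
  have hga := gam_alp _ he
  rcases gam_cases (n.factorization p) with h | h | h <;>
    simp only [h] <;> norm_num <;> rw [← pow_mul] <;> try rw [← pow_add]
  all_goals (congr 1; omega)

lemma squarefree_prod_primes {s : Finset ℕ} (hs : ∀ p ∈ s, p.Prime) :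
    Squarefree (∏ p ∈ s, p) := by
  induction s using Finset.induction_on with
  | empty => simpa using squarefree_one
  | @insert a s ha ih =>
    rw [Finset.prod_insert ha]
    have hap : a.Prime := hs a (Finset.mem_insert_self a s)
    have hcop : Nat.Coprime a (∏ p ∈ s, p) := by
      apply Nat.Coprime.prod_right
      intro p hp
      exact (Nat.coprime_primes hap (hs p (Finset.mem_insert_of_mem hp))).mpr
        (fun h => ha (h ▸ hp))
    exact (Nat.squarefree_mul hcop).mpr ⟨hap.squarefree, ih fun p hp => hs p (Finset.mem_insert_of_mem hp)⟩

lemma pointwise (m : ℕ) {n : ℕ} (hn : n ≠ 0) (h2 : TwoFull n) :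
    (piltz (m+1) n : ℝ) / ((m+1 : ℕ) : ℝ) ^ n.primeFactors.card ≤
      ((5:ℝ)^m) ^ (cpart n).primeFactors.card * ((5:ℝ)^m) ^ (dpart n).primeFactors.card
        * (piltz (m+1) (apart n) : ℝ) := by
  have hfac : (piltz (m+1) n : ℝ) = ∏ p ∈ n.primeFactors,
      (piltz (m+1) (p ^ n.factorization p) : ℝ) := by
    unfold piltz
    rw [ArithmeticFunction.IsMultiplicative.multiplicative_factorization _ (piltz_mult (m+1)) hn,
      Finsupp.prod, Nat.support_factorization]
    push_cast; rfl
  have hpow : ((m+1 : ℕ) : ℝ) ^ n.primeFactors.card = ∏ _p ∈ n.primeFactors, ((m+1:ℕ) : ℝ) := by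
    rw [Finset.prod_const]
  rw [hfac, hpow, ← Finset.prod_div_distrib]
  -- RHS rearrangement
  have hapart : (piltz (m+1) (apart n) : ℝ) =
      ∏ p ∈ n.primeFactors, (piltz (m+1) (p ^ alp (n.factorization p)) : ℝ) := by
    unfold apart piltz
    rw [ArithmeticFunction.IsMultiplicative.map_prod _ (piltz_mult (m+1))]
    · push_cast; rfl
    · intro p hp q hq hpq
      simp only [Function.onFun]
      exact Nat.Coprime.pow _ _ ((Nat.coprime_primes
        (Nat.prime_of_mem_primeFactors hp) (Nat.prime_of_mem_primeFactors hq)).mpr hpq)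
  have hbf : ((5:ℝ)^m) ^ (cpart n).primeFactors.card * ((5:ℝ)^m) ^ (dpart n).primeFactors.card =
      ∏ p ∈ n.primeFactors, (if gam (n.factorization p) = 0 then (1:ℝ) else (5:ℝ)^m) := by
    have hc : (cpart n).primeFactors = n.primeFactors.filter (fun p => gam (n.factorization p) = 3) :=
      Nat.primeFactors_prod (fun p hp => Nat.prime_of_mem_primeFactors (Finset.mem_of_mem_filter p hp))
    have hd : (dpart n).primeFactors = n.primeFactors.filter (fun p => gam (n.factorization p) = 4) :=
      Nat.primeFactors_prod (fun p hp => Nat.prime_of_mem_primeFactors (Finset.mem_of_mem_filter p hp))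
    rw [hc, hd, ← Finset.prod_const, ← Finset.prod_const, ← Finset.prod_filter_mul_prod_filter_not
      n.primeFactors (fun p => gam (n.factorization p) = 3)
      (fun p => (if gam (n.factorization p) = 0 then (1:ℝ) else (5:ℝ)^m))]
    congr 1
    · apply Finset.prod_congr rfl
      intro p hp
      rw [Finset.mem_filter] at hp
      rw [if_neg (by omega)]
    · rw [Finset.prod_filter, Finset.prod_filter]
      apply Finset.prod_congr rfl
      intro p hp
      rcases gam_cases (n.factorization p) with h | h | h <;> simp [h]
  rw [hapart, hbf, Finset.prod_mul_distrib.symm]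
  apply Finset.prod_le_prod
  · intro p hp
    positivity
  · intro p hp
    have pp := Nat.prime_of_mem_primeFactors hp
    have he := twofull_exp hn h2 hp
    rw [div_le_iff₀ (by positivity)]
    have := perprime m (n.factorization p) p pp he
    have hcast : (piltz (m+1) (p ^ n.factorization p) : ℝ) ≤
        ((m+1) * (if gam (n.factorization p) = 0 then 1 else 5^m) *
          piltz (m+1) (p ^ alp (n.factorization p)) : ℕ) := by exact_mod_cast this
    calc (piltz (m+1) (p ^ n.factorization p) : ℝ) ≤ _ := hcast
      _ = (if gam (n.factorization p) = 0 then (1:ℝ) else (5:ℝ)^m) *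
          (piltz (m+1) (p ^ alp (n.factorization p)) : ℝ) * ((m+1:ℕ):ℝ) := by
        push_cast
        split_ifs <;> push_cast <;> ring

lemma log_nat_mono {a b : ℕ} (h : a ≤ b) : Real.log a ≤ Real.log b := by
  rcases Nat.eq_zero_or_pos a with rfl | ha
  · simpa using Real.log_natCast_nonneg b
  · exact Real.log_le_log (by exact_mod_cast ha) (by exact_mod_cast h)

lemma harmonic_bound (M : ℕ) : ∑ m ∈ Icc 1 M, (1:ℝ)/m ≤ 1 + Real.log M := by
  have h1 : ∑ m ∈ Icc 1 M, (1:ℝ)/m = ((harmonic M : ℚ) : ℝ) := by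
    rw [harmonic]
    push_cast
    rw [← Finset.Ico_add_one_right_eq_Icc, Finset.sum_Ico_eq_sum_range]
    apply Finset.sum_congr (by norm_num)
    intro i _
    rw [one_div]
    norm_num [add_comm]
  rw [h1]
  exact harmonic_le_one_add_log M

lemma swap_sum (N : ℕ) (F : ℕ → ℕ → ℝ) :
    ∑ n ∈ Icc 1 N, ∑ x ∈ n.divisorsAntidiagonal, F x.1 x.2
      = ∑ d ∈ Icc 1 N, ∑ m ∈ Icc 1 (N/d), F d m := by
  rw [Finset.sum_sigma', Finset.sum_sigma']
  apply Finset.sum_nbij' (fun x => (⟨x.2.1, x.2.2⟩ : (_ : ℕ) × ℕ))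
    (fun y => (⟨y.1 * y.2, (y.1, y.2)⟩ : (_ : ℕ) × ℕ × ℕ))
  · rintro ⟨n, d, m⟩ hx
    simp only [Finset.mem_sigma, Finset.mem_Icc, Nat.mem_divisorsAntidiagonal] at hx ⊢
    obtain ⟨⟨h1n, hnN⟩, hdm, _⟩ := hx
    have hd1 : 1 ≤ d := by
      rcases Nat.eq_zero_or_pos d with rfl | h; · simp at hdm; omega
      · exact h
    have hm1 : 1 ≤ m := by
      rcases Nat.eq_zero_or_pos m with rfl | h; · simp at hdm; omega
      · exact h
    refine ⟨⟨hd1, ?_⟩, hm1, ?_⟩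
    · calc d ≤ d * m := Nat.le_mul_of_pos_right d hm1
        _ ≤ N := by omega
    · rw [Nat.le_div_iff_mul_le (by omega), mul_comm]
      omega
  · rintro ⟨d, m⟩ hy
    simp only [Finset.mem_sigma, Finset.mem_Icc, Nat.mem_divisorsAntidiagonal] at hy ⊢
    obtain ⟨⟨hd1, hdN⟩, hm1, hmN⟩ := hy
    rw [Nat.le_div_iff_mul_le (by omega)] at hmN
    rw [mul_comm] at hmN
    refine ⟨⟨?_, ?_⟩, ?_⟩
    · nlinarith
    · nlinarith
    · exact ⟨trivial, by positivity⟩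
  · rintro ⟨n, d, m⟩ hx
    simp only [Finset.mem_sigma, Nat.mem_divisorsAntidiagonal] at hx
    simp [hx.2.1]
  · rintro ⟨d, m⟩ _; rfl
  · rintro ⟨n, d, m⟩ _; rfl

lemma sqrt_prod {s : Finset ℕ} (f : ℕ → ℝ) (hf : ∀ i ∈ s, 0 ≤ f i) :
    Real.sqrt (∏ i ∈ s, f i) = ∏ i ∈ s, Real.sqrt (f i) := by
  induction s using Finset.cons_induction with
  | empty => simp
  | cons a s ha ih =>
    rw [Finset.prod_cons, Finset.prod_cons, Real.sqrt_mul (hf a (Finset.mem_cons_self a s)),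
      ih (fun i hi => hf i (Finset.mem_cons_of_mem hi))]

lemma tele32 (N : ℕ) : ∑ m ∈ Icc 2 N, 1/((m:ℝ) * Real.sqrt m) ≤ 2 := by
  have key : ∀ M : ℕ, 1 ≤ M → ∑ m ∈ Icc 2 M, 1/((m:ℝ) * Real.sqrt m) ≤ 2 - 2 / Real.sqrt M := by
    intro M hM
    induction M with
    | zero => omega
    | succ M ih =>
      rcases Nat.lt_or_ge M 1 with h1 | h1
      · interval_cases M
        simp
      · have hs := ih h1
        rw [← Finset.Ico_add_one_right_eq_Icc, Finset.sum_Ico_succ_top (by omega), Finset.Ico_add_one_right_eq_Icc]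
        have ha : (1:ℝ) ≤ Real.sqrt M := by
          rw [show (1:ℝ) = Real.sqrt 1 by simp]
          apply Real.sqrt_le_sqrt; exact_mod_cast h1
        have hb : Real.sqrt M ≤ Real.sqrt (M+1) := by
          apply Real.sqrt_le_sqrt; push_cast; linarith
        have ha2 : Real.sqrt M * Real.sqrt M = M := Real.mul_self_sqrt (by positivity)
        have hb2 : Real.sqrt (M+1) * Real.sqrt (M+1) = (M+1:ℝ) := Real.mul_self_sqrt (by positivity)
        have hkey : 1/(((M+1:ℕ):ℝ) * Real.sqrt (M+1:ℕ)) ≤ 2/Real.sqrt M - 2/Real.sqrt (M+1) := by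
          push_cast
          set a := Real.sqrt M
          set b := Real.sqrt (M+1:ℝ)
          have hab : 0 < a := by linarith
          have hbb : 0 < b := by linarith
          rw [div_sub_div _ _ (ne_of_gt hab) (ne_of_gt hbb), div_le_div_iff₀ (by positivity) (by positivity)]
          have h3 : b*b - a*a = 1 := by rw [hb2, ha2]; ring
          nlinarith [mul_pos hab hbb, mul_pos (mul_pos hab hbb) hbb, sq_nonneg (b-a),
            mul_nonneg (mul_nonneg (sub_nonneg.mpr hb) hbb.le) hbb.le]
        push_cast at hkey ⊢
        have : Real.sqrt ((M:ℝ)+1) = Real.sqrt (M+1:ℝ) := by norm_num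
        linarith
  rcases Nat.lt_or_ge N 2 with h | h
  · rw [Finset.Icc_eq_empty (by omega)]; norm_num
  · have := key N (by omega)
    have : 0 ≤ 2 / Real.sqrt N := by positivity
    linarith [key N (by omega)]

lemma tele2 (N : ℕ) : ∑ m ∈ Icc 2 N, 1/((m:ℝ)^2) ≤ 2 := by
  have hle : ∀ m ∈ Icc 2 N, 1/((m:ℝ)^2) ≤ 1/((m:ℝ) * Real.sqrt m) := by
    intro m hm
    rw [Finset.mem_Icc] at hm
    have h2 : (2:ℝ) ≤ m := by exact_mod_cast hm.1
    have : Real.sqrt m ≤ m := by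
      calc Real.sqrt m ≤ Real.sqrt ((m:ℝ)^2) := Real.sqrt_le_sqrt (by nlinarith)
        _ = m := by rw [Real.sqrt_sq (by linarith)]
    apply one_div_le_one_div_of_le (by positivity)
    nlinarith [Real.sqrt_nonneg (m:ℝ)]
  calc ∑ m ∈ Icc 2 N, 1/((m:ℝ)^2) ≤ ∑ m ∈ Icc 2 N, 1/((m:ℝ) * Real.sqrt m) :=
        Finset.sum_le_sum hle
    _ ≤ 2 := tele32 N

lemma sf_weight_sum (t : ℕ → ℝ) (ht : ∀ m, 0 ≤ t m)
    (htsum : ∀ M : ℕ, ∑ m ∈ Icc 2 M, t m ≤ 2) (B : ℝ) (hB : 0 ≤ B) (N : ℕ) :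
    ∑ c ∈ (Icc 1 N).filter Squarefree, ∏ p ∈ c.primeFactors, (B * t p)
      ≤ Real.exp (2 * B) := by
  classical
  set P := Nat.primesBelow (N+1) with hP
  have hsub : ∀ c ∈ (Icc 1 N).filter Squarefree, c.primeFactors ∈ P.powerset := by
    intro c hc
    rw [Finset.mem_filter, Finset.mem_Icc] at hc
    rw [Finset.mem_powerset]
    intro p hp
    have pp := Nat.prime_of_mem_primeFactors hp
    have hdvd := Nat.dvd_of_mem_primeFactors hp
    have : p ≤ N := le_trans (Nat.le_of_dvd (by omega) hdvd) hc.1.2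
    exact Nat.mem_primesBelow.mpr ⟨by omega, pp⟩
  have hinj : Set.InjOn Nat.primeFactors ((Icc 1 N).filter Squarefree) := by
    intro c1 h1 c2 h2 h
    rw [Finset.coe_filter] at h1 h2
    simp only [Set.mem_setOf_eq] at h1 h2
    rw [← Nat.prod_primeFactors_of_squarefree h1.2, ← Nat.prod_primeFactors_of_squarefree h2.2, h]
  calc ∑ c ∈ (Icc 1 N).filter Squarefree, ∏ p ∈ c.primeFactors, (B * t p)
      = ∑ T ∈ ((Icc 1 N).filter Squarefree).image Nat.primeFactors, ∏ p ∈ T, (B * t p) := by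
        rw [Finset.sum_image (fun c hc c' hc' h => hinj hc hc' h)]
    _ ≤ ∑ T ∈ P.powerset, ∏ p ∈ T, (B * t p) := by
        apply Finset.sum_le_sum_of_subset_of_nonneg
        · intro T hT
          rw [Finset.mem_image] at hT
          obtain ⟨c, hc, rfl⟩ := hT
          exact hsub c hc
        · intro T _ _
          apply Finset.prod_nonneg
          intro p _
          exact mul_nonneg hB (ht p)
    _ = ∏ p ∈ P, (B * t p + 1) := by
        rw [Finset.prod_add]
        apply Finset.sum_congr rfl
        intro T _
        simp
    _ ≤ ∏ p ∈ P, Real.exp (B * t p) := by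
        apply Finset.prod_le_prod
        · intro p _; exact add_nonneg (mul_nonneg hB (ht p)) one_pos.le
        · intro p _; exact Real.add_one_le_exp _
    _ = Real.exp (∑ p ∈ P, B * t p) := (Real.exp_sum P _).symm
    _ ≤ Real.exp (2 * B) := by
        apply Real.exp_le_exp.mpr
        rw [← Finset.mul_sum, mul_comm]
        apply mul_le_mul_of_nonneg_right _ hB
        calc ∑ p ∈ P, t p ≤ ∑ m ∈ Icc 2 N, t m := by
              apply Finset.sum_le_sum_of_subset_of_nonneg
              · intro p hp
                rw [hP, Nat.mem_primesBelow] at hp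
                rw [Finset.mem_Icc]
                exact ⟨hp.2.two_le, by omega⟩
              · intro m _ _; exact ht m
          _ ≤ 2 := htsum N

lemma expand_div (j N : ℕ) :
    ∑ n ∈ Icc 1 N, (piltz (j+1) n : ℝ)/n
      = ∑ n ∈ Icc 1 N, ∑ x ∈ n.divisorsAntidiagonal, (piltz j x.1 : ℝ) / (x.1 * x.2) := by
  apply Finset.sum_congr rfl
  intro n hn
  rw [Finset.mem_Icc] at hn
  have hn0 : n ≠ 0 := by omega
  have : ∀ x ∈ n.divisorsAntidiagonal, (piltz j x.1 : ℝ)/(x.1 * x.2) = (piltz j x.1 : ℝ)/n := by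
    intro x hx
    rw [Nat.mem_divisorsAntidiagonal] at hx
    rw [← hx.1]; push_cast; ring_nf
  rw [Finset.sum_congr rfl this, ← Finset.sum_div]
  rw [piltz_succ_apply j n hn0]
  push_cast
  rw [← Nat.sum_divisorsAntidiagonal (fun d _m => (piltz j d : ℝ))]

lemma piltz_div_sum (j N : ℕ) :
    ∑ n ∈ Icc 1 N, (piltz j n : ℝ)/n ≤ (1 + Real.log N)^j := by
  have hlog : (0:ℝ) ≤ 1 + Real.log N := by
    have := Real.log_natCast_nonneg N; linarith
  induction j with
  | zero =>
    calc ∑ n ∈ Icc 1 N, (piltz 0 n : ℝ)/n ≤ ∑ n ∈ Icc 1 N, (if n = 1 then (1:ℝ) else 0) := by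
          apply Finset.sum_le_sum
          intro n hn
          rw [Finset.mem_Icc] at hn
          have : piltz 0 n = if n = 1 then 1 else 0 := by simp [piltz, one_apply]
          rw [this]
          split_ifs with h
          · subst h; norm_num
          · norm_num
      _ ≤ 1 := by rw [Finset.sum_ite_eq' (Icc 1 N) 1 (fun _ => (1:ℝ))]; split_ifs <;> norm_num
      _ = (1 + Real.log N)^0 := by norm_num
  | succ j ih =>
    rw [expand_div j N, swap_sum N (fun d m => (piltz j d : ℝ)/(d*m))]
    have hstep : ∀ d ∈ Icc 1 N, ∑ m ∈ Icc 1 (N/d), (piltz j d : ℝ)/(d*m)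
        ≤ ((piltz j d : ℝ)/d) * (1 + Real.log N) := by
      intro d hd
      rw [Finset.mem_Icc] at hd
      have : ∀ m ∈ Icc 1 (N/d), (piltz j d : ℝ)/(d*m) = ((piltz j d:ℝ)/d) * (1/m) := by
        intro m hm; push_cast; field_simp
      rw [Finset.sum_congr rfl this, ← Finset.mul_sum]
      apply mul_le_mul_of_nonneg_left _ (by positivity)
      calc ∑ m ∈ Icc 1 (N/d), (1:ℝ)/m ≤ 1 + Real.log (N/d : ℕ) := harmonic_bound _
        _ ≤ 1 + Real.log N := by
            have := log_nat_mono (Nat.div_le_self N d); linarith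
    calc ∑ d ∈ Icc 1 N, ∑ m ∈ Icc 1 (N/d), (piltz j d : ℝ)/(d*m)
        ≤ ∑ d ∈ Icc 1 N, ((piltz j d : ℝ)/d) * (1 + Real.log N) := Finset.sum_le_sum hstep
      _ = (∑ d ∈ Icc 1 N, (piltz j d : ℝ)/d) * (1 + Real.log N) := by rw [Finset.sum_mul]
      _ ≤ (1 + Real.log N)^j * (1 + Real.log N) := by
          apply mul_le_mul_of_nonneg_right ih hlog
      _ = (1 + Real.log N)^(j+1) := by ring

lemma expand_sum (j N : ℕ) :
    ∑ n ∈ Icc 1 N, (piltz (j+1) n : ℝ)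
      = ∑ n ∈ Icc 1 N, ∑ x ∈ n.divisorsAntidiagonal, (piltz j x.1 : ℝ) := by
  apply Finset.sum_congr rfl
  intro n hn
  rw [Finset.mem_Icc] at hn
  rw [piltz_succ_apply j n (by omega)]
  push_cast
  rw [← Nat.sum_divisorsAntidiagonal (fun d _m => (piltz j d : ℝ))]

lemma piltz_sum (j N : ℕ) :
    ∑ n ∈ Icc 1 N, (piltz (j+1) n : ℝ) ≤ N * (1 + Real.log N)^j := by
  rw [expand_sum j N, swap_sum N (fun d _m => (piltz j d : ℝ))]
  have h1 : ∀ d ∈ Icc 1 N, ∑ _m ∈ Icc 1 (N/d), (piltz j d : ℝ) ≤ (N:ℝ) * ((piltz j d : ℝ)/d) := by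
    intro d hd
    rw [Finset.mem_Icc] at hd
    rw [Finset.sum_const, Nat.card_Icc, nsmul_eq_mul]
    have hcard : ((N/d + 1 - 1 : ℕ) : ℝ) ≤ (N:ℝ)/d := by
      simp only [Nat.add_sub_cancel]
      exact Nat.cast_div_le
    calc ((N/d + 1 - 1 : ℕ) : ℝ) * (piltz j d : ℝ)
        ≤ ((N:ℝ)/d) * (piltz j d : ℝ) := by
          apply mul_le_mul_of_nonneg_right hcard (by positivity)
      _ = (N:ℝ) * ((piltz j d : ℝ)/d) := by ring
  calc ∑ d ∈ Icc 1 N, ∑ _m ∈ Icc 1 (N/d), (piltz j d : ℝ)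
      ≤ ∑ d ∈ Icc 1 N, (N:ℝ) * ((piltz j d : ℝ)/d) := Finset.sum_le_sum h1
    _ = (N:ℝ) * ∑ d ∈ Icc 1 N, (piltz j d : ℝ)/d := by rw [Finset.mul_sum]
    _ ≤ (N:ℝ) * (1 + Real.log N)^j := by
        apply mul_le_mul_of_nonneg_left (piltz_div_sum j N) (by positivity)

end Aux

/-- For `k ≥ 2` there is `C` depending only on `k` such that for all `x ≥ 2`,
the sum of `D_{k-1}(n)` over 2-full `n ≤ x` is at most `C·x^{1/2}·(log x)^{k-2}`. -/
theorem stmt_7 (k : ℕ) (hk : 2 ≤ k) :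
    ∃ C : ℝ, 0 < C ∧ ∀ x : ℝ, 2 ≤ x →
      ∑ n ∈ (Icc 1 ⌊x⌋₊).filter TwoFull, Dk (k - 1) n ≤
        C * x ^ (1 / 2 : ℝ) * Real.log x ^ (k - 2) := by
  classical
  obtain ⟨m, rfl⟩ : ∃ m, k = m + 2 := ⟨k - 2, by omega⟩
  set B : ℝ := (5:ℝ)^m with hBdef
  have hB0 : (0:ℝ) ≤ B := by positivity
  refine ⟨Real.exp (4*B) * 3^m, by positivity, ?_⟩
  intro x hx
  set N := ⌊x⌋₊ with hN
  have hN2 : 2 ≤ N := Nat.le_floor (by exact_mod_cast hx)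
  have hNx : (N : ℝ) ≤ x := Nat.floor_le (by linarith)
  have hxpos : (0:ℝ) < x := by linarith
  have hlogx : (0:ℝ) < Real.log x := Real.log_pos (by linarith)
  have hlogN : Real.log N ≤ Real.log x :=
    Real.log_le_log (by exact_mod_cast Nat.lt_of_lt_of_le Nat.zero_lt_two hN2) hNx
  -- weight functions
  set t32 : ℕ → ℝ := fun p => 1/((p:ℝ) * Real.sqrt p) with ht32def
  set t2 : ℕ → ℝ := fun p => 1/((p:ℝ)^2) with ht2def
  set W : ℝ := Real.sqrt x * (1 + Real.log x)^m with hWdef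
  have hW0 : 0 ≤ W := by positivity
  set F : (ℕ × ℕ) × ℕ → ℝ := fun q =>
    B ^ q.1.1.primeFactors.card * B ^ q.1.2.primeFactors.card * (piltz (m+1) q.2 : ℝ) with hF
  have hFnonneg : ∀ q, 0 ≤ F q := by intro q; positivity
  set T : Finset ((ℕ × ℕ) × ℕ) :=
    ((Icc 1 N ×ˢ Icc 1 N) ×ˢ Icc 1 N).filter
      (fun q => Squarefree q.1.1 ∧ Squarefree q.1.2 ∧ q.2^2 * (q.1.1^3 * q.1.2^4) ≤ N) with hT
  set φ : ℕ → (ℕ × ℕ) × ℕ := fun n => ((cpart n, dpart n), apart n) with hφ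
  -- Step 1: pointwise bound
  have step1 : ∑ n ∈ (Icc 1 N).filter TwoFull, Dk (m + 2 - 1) n
      ≤ ∑ n ∈ (Icc 1 N).filter TwoFull, F (φ n) := by
    apply Finset.sum_le_sum
    intro n hn
    rw [Finset.mem_filter, Finset.mem_Icc] at hn
    have hn0 : n ≠ 0 := by omega
    have := pointwise m hn0 hn.2
    rw [show m + 2 - 1 = m + 1 from rfl]
    exact this
  -- Step 2: map into triple set
  have hmem : ∀ n ∈ (Icc 1 N).filter TwoFull, φ n ∈ T := by
    intro n hn
    rw [Finset.mem_filter, Finset.mem_Icc] at hn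
    have hn0 : n ≠ 0 := by omega
    have hpm := parts_mul hn0 hn.2
    have hc0 : cpart n ≠ 0 := by intro h; rw [h] at hpm; simp at hpm; omega
    have hd0 : dpart n ≠ 0 := by intro h; rw [h] at hpm; simp at hpm; omega
    have ha0 : apart n ≠ 0 := by intro h; rw [h] at hpm; simp at hpm; omega
    have hcd : cpart n ∣ n := by
      conv_rhs => rw [← hpm]
      exact dvd_trans (dvd_pow_self (cpart n) (n := 3) (by norm_num))
        (dvd_mul_of_dvd_right (dvd_mul_right _ _) _)
    have hdd : dpart n ∣ n := by
      conv_rhs => rw [← hpm]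
      exact dvd_trans (dvd_pow_self (dpart n) (n := 4) (by norm_num))
        (dvd_mul_of_dvd_right (dvd_mul_left _ _) _)
    have had : apart n ∣ n := by
      conv_rhs => rw [← hpm]
      exact dvd_trans (dvd_pow_self (apart n) (n := 2) (by norm_num)) (dvd_mul_right _ _)
    have hsqc : Squarefree (cpart n) :=
      squarefree_prod_primes (fun p hp =>
        Nat.prime_of_mem_primeFactors (Finset.mem_of_mem_filter p hp))
    have hsqd : Squarefree (dpart n) :=
      squarefree_prod_primes (fun p hp =>
        Nat.prime_of_mem_primeFactors (Finset.mem_of_mem_filter p hp))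
    have hcle : cpart n ≤ n := Nat.le_of_dvd (Nat.pos_of_ne_zero hn0) hcd
    have hdle : dpart n ≤ n := Nat.le_of_dvd (Nat.pos_of_ne_zero hn0) hdd
    have hale : apart n ≤ n := Nat.le_of_dvd (Nat.pos_of_ne_zero hn0) had
    show ((cpart n, dpart n), apart n) ∈ T
    rw [hT, Finset.mem_filter, Finset.mem_product, Finset.mem_product]
    refine ⟨⟨⟨?_, ?_⟩, ?_⟩, hsqc, hsqd, ?_⟩
    · rw [Finset.mem_Icc]
      exact ⟨Nat.pos_of_ne_zero hc0, le_trans hcle hn.1.2⟩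
    · rw [Finset.mem_Icc]
      exact ⟨Nat.pos_of_ne_zero hd0, le_trans hdle hn.1.2⟩
    · rw [Finset.mem_Icc]
      exact ⟨Nat.pos_of_ne_zero ha0, le_trans hale hn.1.2⟩
    · show apart n ^2 * (cpart n ^3 * dpart n ^4) ≤ N
      rw [hpm]; exact hn.1.2
  have hinj : Set.InjOn φ ((Icc 1 N).filter TwoFull) := by
    intro n1 h1 n2 h2 heq
    rw [Finset.coe_filter] at h1 h2
    simp only [Set.mem_setOf_eq, Finset.mem_Icc] at h1 h2
    have e1 := parts_mul (show n1 ≠ 0 by omega) h1.2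
    have e2 := parts_mul (show n2 ≠ 0 by omega) h2.2
    rw [hφ] at heq
    simp only [Prod.mk.injEq] at heq
    rw [← e1, ← e2, heq.1.1, heq.1.2, heq.2]
  have step2 : ∑ n ∈ (Icc 1 N).filter TwoFull, F (φ n) ≤ ∑ q ∈ T, F q := by
    rw [← Finset.sum_image (fun a ha b hb h => hinj ha hb h)]
    apply Finset.sum_le_sum_of_subset_of_nonneg
    · intro q hq
      rw [Finset.mem_image] at hq
      obtain ⟨n, hn, rfl⟩ := hq
      exact hmem n hn
    · intro q _ _; exact hFnonneg q
  -- Step 3: unfold the triple sum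
  have step3 : ∑ q ∈ T, F q = ∑ c ∈ Icc 1 N, ∑ d ∈ Icc 1 N, ∑ a ∈ Icc 1 N,
      (if Squarefree c ∧ Squarefree d ∧ a^2 * (c^3*d^4) ≤ N then F ((c,d),a) else 0) := by
    rw [hT, Finset.sum_filter, Finset.sum_product, Finset.sum_product]
  -- inner bound
  set U : ℕ → ℝ := fun c => if Squarefree c then B ^ c.primeFactors.card * t32 c else 0 with hU
  set V : ℕ → ℝ := fun d => if Squarefree d then B ^ d.primeFactors.card * t2 d else 0 with hV
  have hU0 : ∀ c, 0 ≤ U c := by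
    intro c; rw [hU]; dsimp only; split_ifs
    · apply mul_nonneg (by positivity)
      apply div_nonneg one_pos.le
      positivity
    · exact le_refl 0
  have hV0 : ∀ d, 0 ≤ V d := by
    intro d; rw [hV]; dsimp only; split_ifs
    · apply mul_nonneg (by positivity)
      apply div_nonneg one_pos.le
      positivity
    · exact le_refl 0
  have key : ∀ c ∈ Icc 1 N, ∀ d ∈ Icc 1 N,
      (∑ a ∈ Icc 1 N, if Squarefree c ∧ Squarefree d ∧ a^2*(c^3*d^4) ≤ N then F ((c,d),a) else 0)
        ≤ U c * V d * W := by
    intro c hc d hd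
    rw [Finset.mem_Icc] at hc hd
    by_cases hsq : Squarefree c ∧ Squarefree d
    · obtain ⟨hsc, hsd⟩ := hsq
      set A := Nat.sqrt (N / (c^3*d^4)) with hA
      have hcd4 : 0 < c^3*d^4 := by
        have h1 : 0 < c := hc.1
        have h2 : 0 < d := hd.1
        positivity
      have h1 : (∑ a ∈ Icc 1 N,
            if Squarefree c ∧ Squarefree d ∧ a^2*(c^3*d^4) ≤ N then F ((c,d),a) else 0)
          = B ^ c.primeFactors.card * B ^ d.primeFactors.card *
            ∑ a ∈ Icc 1 N, (if a^2*(c^3*d^4) ≤ N then (piltz (m+1) a : ℝ) else 0) := by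
        rw [Finset.mul_sum]
        apply Finset.sum_congr rfl
        intro a _
        by_cases hcond : a^2*(c^3*d^4) ≤ N
        · rw [if_pos ⟨hsc, hsd, hcond⟩, if_pos hcond, hF]
        · rw [if_neg (fun h => hcond h.2.2), if_neg hcond, mul_zero]
      have h2 : ∑ a ∈ Icc 1 N, (if a^2*(c^3*d^4) ≤ N then (piltz (m+1) a : ℝ) else 0)
          ≤ ∑ a ∈ Icc 1 A, (piltz (m+1) a : ℝ) := by
        rw [← Finset.sum_filter]
        apply Finset.sum_le_sum_of_subset_of_nonneg
        · intro a ha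
          rw [Finset.mem_filter, Finset.mem_Icc] at ha
          rw [Finset.mem_Icc]
          refine ⟨ha.1.1, ?_⟩
          rw [hA, Nat.le_sqrt, Nat.le_div_iff_mul_le hcd4]
          calc a*a*(c^3*d^4) = a^2*(c^3*d^4) := by ring
            _ ≤ N := ha.2
        · intros; positivity
      have h3 := piltz_sum m A
      have hAN : A ≤ N := le_trans (Nat.sqrt_le_self _) (Nat.div_le_self _ _)
      have hlogA : (0:ℝ) ≤ 1 + Real.log A := by
        have := Real.log_natCast_nonneg A; linarith
      have h4 : (1 + Real.log A)^m ≤ (1 + Real.log x)^m := by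
        apply pow_le_pow_left₀ hlogA
        have h5 := log_nat_mono hAN
        linarith
      have hc1 : (1:ℝ) ≤ (c:ℝ) := by exact_mod_cast hc.1
      have hd1 : (1:ℝ) ≤ (d:ℝ) := by exact_mod_cast hd.1
      have hsc0 : (0:ℝ) < Real.sqrt c := Real.sqrt_pos.mpr (by linarith)
      have h5 : (A:ℝ) ≤ Real.sqrt x * t32 c * t2 d := by
        have hAA : ((A:ℝ))^2 ≤ x / ((c:ℝ)^3 * (d:ℝ)^4) := by
          have hnat : A*A ≤ N/(c^3*d^4) := by
            have := Nat.sqrt_le' (N/(c^3*d^4))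
            simpa [pow_two] using this
          have hcast : ((A*A : ℕ):ℝ) ≤ ((N/(c^3*d^4) : ℕ):ℝ) := by exact_mod_cast hnat
          have hdivle : ((N/(c^3*d^4) : ℕ):ℝ) ≤ (N:ℝ)/(((c^3*d^4 : ℕ)):ℝ) := Nat.cast_div_le
          have hd2 : (N:ℝ)/(((c^3*d^4 : ℕ)):ℝ) ≤ x / ((c:ℝ)^3 * (d:ℝ)^4) := by
            push_cast
            apply div_le_div_of_nonneg_right hNx ?_ |>.trans ?_
            · positivity
            · exact le_refl _
          calc ((A:ℝ))^2 = ((A*A : ℕ):ℝ) := by push_cast; ring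
            _ ≤ ((N/(c^3*d^4) : ℕ):ℝ) := hcast
            _ ≤ (N:ℝ)/(((c^3*d^4 : ℕ)):ℝ) := hdivle
            _ ≤ x / ((c:ℝ)^3 * (d:ℝ)^4) := hd2
        have hAle : (A:ℝ) ≤ Real.sqrt (x / ((c:ℝ)^3*(d:ℝ)^4)) := Real.le_sqrt_of_sq_le hAA
        have hsq34 : Real.sqrt ((c:ℝ)^3*(d:ℝ)^4) = ((c:ℝ)*Real.sqrt c)*((d:ℝ)^2) := by
          rw [Real.sqrt_mul (by positivity)]
          congr 1
          · rw [show (c:ℝ)^3 = (c:ℝ)^2*(c:ℝ) by ring, Real.sqrt_mul (by positivity),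
              Real.sqrt_sq (by positivity)]
          · rw [show (d:ℝ)^4 = ((d:ℝ)^2)^2 by ring, Real.sqrt_sq (by positivity)]
        rw [Real.sqrt_div hxpos.le, hsq34] at hAle
        refine le_trans hAle (le_of_eq ?_)
        rw [ht32def, ht2def]
        dsimp only
        field_simp
      calc (∑ a ∈ Icc 1 N,
            if Squarefree c ∧ Squarefree d ∧ a^2*(c^3*d^4) ≤ N then F ((c,d),a) else 0)
          = B ^ c.primeFactors.card * B ^ d.primeFactors.card *
            ∑ a ∈ Icc 1 N, (if a^2*(c^3*d^4) ≤ N then (piltz (m+1) a : ℝ) else 0) := h1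
        _ ≤ B ^ c.primeFactors.card * B ^ d.primeFactors.card *
            ((A:ℝ) * (1 + Real.log A)^m) := by
            apply mul_le_mul_of_nonneg_left (le_trans h2 h3) (by positivity)
        _ ≤ B ^ c.primeFactors.card * B ^ d.primeFactors.card *
            ((Real.sqrt x * t32 c * t2 d) * (1 + Real.log x)^m) := by
            apply mul_le_mul_of_nonneg_left _ (by positivity)
            apply mul_le_mul h5 h4 (by positivity) ?_
            have ht32p : 0 ≤ t32 c := by
              rw [ht32def]; dsimp only
              apply div_nonneg one_pos.le; positivity
            have ht2p : 0 ≤ t2 d := by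
              rw [ht2def]; dsimp only
              apply div_nonneg one_pos.le; positivity
            positivity
        _ = U c * V d * W := by
            rw [hU, hV, hWdef]; dsimp only
            rw [if_pos hsc, if_pos hsd]
            ring
    · have hz : ∀ a ∈ Icc 1 N,
          (if Squarefree c ∧ Squarefree d ∧ a^2*(c^3*d^4) ≤ N then F ((c,d),a) else 0) = 0 :=
        fun a _ => if_neg (fun h => hsq ⟨h.1, h.2.1⟩)
      rw [Finset.sum_eq_zero hz]
      exact mul_nonneg (mul_nonneg (hU0 c) (hV0 d)) hW0
  have step4 : ∑ c ∈ Icc 1 N, ∑ d ∈ Icc 1 N, ∑ a ∈ Icc 1 N,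
      (if Squarefree c ∧ Squarefree d ∧ a^2 * (c^3*d^4) ≤ N then F ((c,d),a) else 0)
      ≤ (∑ c ∈ Icc 1 N, U c) * ((∑ d ∈ Icc 1 N, V d) * W) := by
    calc ∑ c ∈ Icc 1 N, ∑ d ∈ Icc 1 N, ∑ a ∈ Icc 1 N,
        (if Squarefree c ∧ Squarefree d ∧ a^2 * (c^3*d^4) ≤ N then F ((c,d),a) else 0)
        ≤ ∑ c ∈ Icc 1 N, ∑ d ∈ Icc 1 N, U c * V d * W := by
          apply Finset.sum_le_sum
          intro c hc
          apply Finset.sum_le_sum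
          intro d hd
          exact key c hc d hd
      _ = (∑ c ∈ Icc 1 N, U c) * ((∑ d ∈ Icc 1 N, V d) * W) := by
          rw [Finset.sum_mul]
          apply Finset.sum_congr rfl
          intro c _
          rw [Finset.sum_mul, Finset.mul_sum]
          apply Finset.sum_congr rfl
          intro d _
          ring
  -- the two squarefree sums
  have hprodc : ∀ c ∈ (Icc 1 N).filter Squarefree,
      B ^ c.primeFactors.card * t32 c = ∏ p ∈ c.primeFactors, (B * t32 p) := by
    intro c hcm
    rw [Finset.mem_filter, Finset.mem_Icc] at hcm
    obtain ⟨⟨hc1, _⟩, hsf⟩ := hcm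
    rw [Finset.prod_mul_distrib, Finset.prod_const]
    congr 1
    rw [ht32def]
    dsimp only
    rw [Finset.prod_div_distrib, Finset.prod_const_one]
    congr 1
    rw [Finset.prod_mul_distrib]
    rw [← sqrt_prod (fun p => (p:ℝ)) (fun i _ => by positivity)]
    rw [← Nat.cast_prod, Nat.prod_primeFactors_of_squarefree hsf]
  have hprodd : ∀ d ∈ (Icc 1 N).filter Squarefree,
      B ^ d.primeFactors.card * t2 d = ∏ p ∈ d.primeFactors, (B * t2 p) := by
    intro d hdm
    rw [Finset.mem_filter, Finset.mem_Icc] at hdm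
    obtain ⟨⟨hd1, _⟩, hsf⟩ := hdm
    rw [Finset.prod_mul_distrib, Finset.prod_const]
    congr 1
    rw [ht2def]
    dsimp only
    rw [Finset.prod_div_distrib, Finset.prod_const_one]
    congr 1
    rw [Finset.prod_pow, ← Nat.cast_prod, Nat.prod_primeFactors_of_squarefree hsf]
  have hUsum : ∑ c ∈ Icc 1 N, U c ≤ Real.exp (2*B) := by
    rw [hU, ← Finset.sum_filter, Finset.sum_congr rfl hprodc]
    apply sf_weight_sum t32 ?_ tele32 B hB0 N
    intro p
    rw [ht32def]; dsimp only
    apply div_nonneg one_pos.le; positivity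
  have hVsum : ∑ d ∈ Icc 1 N, V d ≤ Real.exp (2*B) := by
    rw [hV, ← Finset.sum_filter, Finset.sum_congr rfl hprodd]
    apply sf_weight_sum t2 ?_ tele2 B hB0 N
    intro p
    rw [ht2def]; dsimp only
    apply div_nonneg one_pos.le; positivity
  have hUs0 : 0 ≤ ∑ c ∈ Icc 1 N, U c := Finset.sum_nonneg (fun c _ => hU0 c)
  have hVs0 : 0 ≤ ∑ d ∈ Icc 1 N, V d := Finset.sum_nonneg (fun d _ => hV0 d)
  -- final log bound
  have hlog3 : (1 + Real.log x)^m ≤ 3^m * Real.log x ^ m := by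
    rw [← mul_pow]
    apply pow_le_pow_left₀ (by linarith)
    have hl2 : (0.6931471803 : ℝ) < Real.log 2 := Real.log_two_gt_d9
    have : Real.log 2 ≤ Real.log x := Real.log_le_log two_pos hx
    linarith
  calc ∑ n ∈ (Icc 1 N).filter TwoFull, Dk (m + 2 - 1) n
      ≤ ∑ n ∈ (Icc 1 N).filter TwoFull, F (φ n) := step1
    _ ≤ ∑ q ∈ T, F q := step2
    _ = ∑ c ∈ Icc 1 N, ∑ d ∈ Icc 1 N, ∑ a ∈ Icc 1 N,
        (if Squarefree c ∧ Squarefree d ∧ a^2 * (c^3*d^4) ≤ N then F ((c,d),a) else 0) := step3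
    _ ≤ (∑ c ∈ Icc 1 N, U c) * ((∑ d ∈ Icc 1 N, V d) * W) := step4
    _ ≤ Real.exp (2*B) * (Real.exp (2*B) * W) := by
        apply mul_le_mul hUsum (mul_le_mul_of_nonneg_right hVsum hW0)
          (mul_nonneg hVs0 hW0) (Real.exp_nonneg _)
    _ = Real.exp (4*B) * (Real.sqrt x * (1 + Real.log x)^m) := by
        rw [hWdef, ← mul_assoc, ← Real.exp_add, show (2*B+2*B) = 4*B by ring]
    _ ≤ Real.exp (4*B) * (Real.sqrt x * (3^m * Real.log x ^ m)) := by
        apply mul_le_mul_of_nonneg_left _ (Real.exp_nonneg _)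
        apply mul_le_mul_of_nonneg_left hlog3 (Real.sqrt_nonneg x)
    _ = Real.exp (4*B) * 3^m * x ^ (1/2 : ℝ) * Real.log x ^ (m + 2 - 2) := by
        rw [← Real.sqrt_eq_rpow, show m + 2 - 2 = m from rfl]
        ring
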